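/- For distinct i, j ∈ {1,2,3}, every class of the partition S equals the intersection of a class of S_i with a class of S_j; that is, S = {T_i ∩ T_j : T_i ∈ S_i, T_j ∈ S_j} (discarding empty intersections). -/

import Mathlib

open scoped Pointwise

/-- The partition `S = {{g} : g ∈ P} ∪ {X_i g : g ∈ P, i ∈ {1,2,3}}`,
where `X i = Pᵢ aᵢ`. -/
def schurClasses {G : Type*} [CommGroup G] (P : Subgroup G) (a : Fin 3 → G)
    (Psub : Fin 3 → Subgroup G) : Set (Set G) :=
  {T | (∃ g ∈ P, T = {g}) ∨ ∃ i : Fin 3, ∃ g ∈ P, T = (Psub i : Set G) * {a i} * {g}}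

/-- The partition `S_i = {{g}, X_j g, X_k g ({j,k} = {1,2,3}∖{i}), Y_i : g ∈ P}`,
where `X l = P_l a_l` and `Y i = P a_i`. -/
def fusionClasses {G : Type*} [CommGroup G] (P : Subgroup G) (a : Fin 3 → G)
    (Psub : Fin 3 → Subgroup G) (i : Fin 3) : Set (Set G) :=
  {T | (∃ g ∈ P, T = {g}) ∨
       (∃ l : Fin 3, l ≠ i ∧ ∃ g ∈ P, T = (Psub l : Set G) * {a l} * {g}) ∨
       T = (P : Set G) * {a i}}

section aux
variable {G : Type*} [CommGroup G]

private lemma memX (s : Set G) (b g x : G) :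
    x ∈ s * {b} * {g} ↔ ∃ p ∈ s, p * b * g = x := by
  simp only [Set.mem_mul, Set.mem_singleton_iff]
  constructor
  · rintro ⟨y, ⟨z, hz, w, rfl, rfl⟩, v, rfl, rfl⟩
    exact ⟨z, hz, rfl⟩
  · rintro ⟨p, hp, rfl⟩
    exact ⟨p * b, ⟨p, hp, b, rfl, rfl⟩, g, rfl, rfl⟩

private lemma memY (s : Set G) (b x : G) :
    x ∈ s * {b} ↔ ∃ p ∈ s, p * b = x := by
  simp only [Set.mem_mul, Set.mem_singleton_iff]
  constructor
  · rintro ⟨y, hy, v, rfl, rfl⟩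
    exact ⟨y, hy, rfl⟩
  · rintro ⟨p, hp, rfl⟩
    exact ⟨p, hp, b, rfl, rfl⟩

private lemma shift {p q al am g g' : G} (h : p * al * g = q * am * g') :
    al = (p⁻¹ * q * (g' * g⁻¹)) * am := by
  have h2 : al = p⁻¹ * (q * am * g') * g⁻¹ := by rw [← h]; group
  rw [h2]
  simp [mul_assoc, mul_comm, mul_left_comm]

end aux

theorem stmt4 {G : Type*} [CommGroup G] [Fintype G] (p : ℕ) (hp : p.Prime) (hp5 : 5 ≤ p)
    (A P : Subgroup G) (hAP_inf : A ⊓ P = ⊥) (hAP_sup : A ⊔ P = ⊤)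
    (hA_card : Nat.card A = 4) (hA_exp : ∀ x ∈ A, x ^ 2 = 1)
    (hP_card : Nat.card P = p ^ 2) (hP_exp : ∀ x ∈ P, x ^ p = 1)
    (a : Fin 3 → G) (ha_mem : ∀ i, a i ∈ A) (ha_ne : ∀ i, a i ≠ 1)
    (ha_inj : Function.Injective a)
    (Psub : Fin 3 → Subgroup G) (hPsub_le : ∀ i, Psub i ≤ P)
    (hPsub_card : ∀ i, Nat.card (Psub i) = p) (hPsub_inj : Function.Injective Psub)
    (i j : Fin 3) (hij : i ≠ j) :
    schurClasses P a Psub =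
      {T | ∃ Ti ∈ fusionClasses P a Psub i, ∃ Tj ∈ fusionClasses P a Psub j,
        T = Ti ∩ Tj ∧ T.Nonempty} := by
  have hone : ∀ u, u ∈ A → u ∈ P → u = 1 := by
    intro u hA hP
    have : u ∈ A ⊓ P := ⟨hA, hP⟩
    rw [hAP_inf] at this
    exact Subgroup.mem_bot.mp this
  have hsame : ∀ l m : Fin 3, a l * (a m)⁻¹ ∈ P → l = m := by
    intro l m h
    apply ha_inj
    have := hone _ (mul_mem (ha_mem l) (inv_mem (ha_mem m))) h
    exact mul_inv_eq_one.mp this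
  have hXY : ∀ (l : Fin 3) (g : G), g ∈ P →
      (Psub l : Set G) * {a l} * {g} ⊆ (P : Set G) * {a l} := by
    intro l g hg x hx
    rw [memX] at hx
    obtain ⟨q, hq, rfl⟩ := hx
    rw [memY]
    refine ⟨q * g, ?_, by simp [mul_assoc, mul_comm, mul_left_comm]⟩
    exact mul_mem (hPsub_le l hq) hg
  have hXne : ∀ (l : Fin 3) (g : G), ((Psub l : Set G) * {a l} * {g}).Nonempty := by
    intro l g
    exact ⟨a l * g, (memX _ _ _ _).mpr ⟨1, SetLike.mem_coe.mpr (one_mem _), by group⟩⟩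
  have hXXsub : ∀ (l : Fin 3) (g g' q r : G), q ∈ Psub l → r ∈ Psub l → g = q⁻¹ * r * g' →
      (Psub l : Set G) * {a l} * {g} ⊆ (Psub l : Set G) * {a l} * {g'} := by
    intro l g g' q r hq hr hgg x hx
    subst hgg
    rw [memX] at hx ⊢
    obtain ⟨s, hs, rfl⟩ := hx
    refine ⟨s * (q⁻¹ * r), ?_, by simp [mul_assoc, mul_comm, mul_left_comm]⟩
    exact mul_mem hs (mul_mem (inv_mem hq) hr)
  ext T
  simp only [schurClasses, fusionClasses, Set.mem_setOf_eq]
  constructor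
  · rintro (⟨g, hg, rfl⟩ | ⟨l, g, hg, rfl⟩)
    · exact ⟨{g}, Or.inl ⟨g, hg, rfl⟩, {g}, Or.inl ⟨g, hg, rfl⟩,
        (Set.inter_self _).symm, ⟨g, rfl⟩⟩
    · by_cases hli : l = i
      · subst hli
        refine ⟨(P : Set G) * {a l}, Or.inr (Or.inr rfl),
          (Psub l : Set G) * {a l} * {g}, Or.inr (Or.inl ⟨l, hij, g, hg, rfl⟩),
          (Set.inter_eq_right.mpr (hXY l g hg)).symm, hXne l g⟩
      · by_cases hlj : l = j
        · subst hlj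
          refine ⟨(Psub l : Set G) * {a l} * {g}, Or.inr (Or.inl ⟨l, hli, g, hg, rfl⟩),
            (P : Set G) * {a l}, Or.inr (Or.inr rfl),
            (Set.inter_eq_left.mpr (hXY l g hg)).symm, hXne l g⟩
        · refine ⟨(Psub l : Set G) * {a l} * {g}, Or.inr (Or.inl ⟨l, hli, g, hg, rfl⟩),
            (Psub l : Set G) * {a l} * {g}, Or.inr (Or.inl ⟨l, hlj, g, hg, rfl⟩),
            (Set.inter_self _).symm, hXne l g⟩
  · rintro ⟨Ti, hTi, Tj, hTj, rfl, x, hxi, hxj⟩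
    rcases hTi with ⟨g, hg, rfl⟩ | ⟨l, hli, g, hg, rfl⟩ | rfl
    · -- Ti singleton
      rw [Set.mem_singleton_iff] at hxi
      subst hxi
      exact Or.inl ⟨x, hg, Set.inter_eq_left.mpr (Set.singleton_subset_iff.mpr hxj)⟩
    · -- Ti = X_l g
      rw [memX] at hxi
      obtain ⟨q, hq, hqx⟩ := hxi
      rcases hTj with ⟨g', hg', rfl⟩ | ⟨m, hmj, g', hg', rfl⟩ | rfl
      · -- Tj singleton
        rw [Set.mem_singleton_iff] at hxj
        subst hxj
        exact Or.inl ⟨x, hg', Set.inter_eq_right.mpr (Set.singleton_subset_iff.mpr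
          ((memX _ _ _ _).mpr ⟨q, hq, hqx⟩))⟩
      · -- Tj = X_m g'
        rw [memX] at hxj
        obtain ⟨r, hr, hrx⟩ := hxj
        have heq : q * a l * g = r * a m * g' := hqx.trans hrx.symm
        have hP : a l * (a m)⁻¹ ∈ P := by
          rw [mul_inv_eq_iff_eq_mul.mpr (shift heq)]
          exact mul_mem (mul_mem (inv_mem (hPsub_le l hq)) (hPsub_le m hr))
            (mul_mem hg' (inv_mem hg))
        have hlm : l = m := hsame l m hP
        subst hlm
        have hu : q⁻¹ * r * (g' * g⁻¹) = 1 := right_eq_mul.mp (shift heq)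
        rw [← mul_assoc] at hu
        have hgg : g = q⁻¹ * r * g' := (mul_inv_eq_one.mp hu).symm
        have hE : (Psub l : Set G) * {a l} * {g} = (Psub l : Set G) * {a l} * {g'} :=
          subset_antisymm (hXXsub l g g' q r hq hr hgg)
            (hXXsub l g' g r q hr hq (by rw [hgg]; group))
        exact Or.inr ⟨l, g, hg, by rw [hE, Set.inter_self]⟩
      · -- Tj = Y_j
        rw [memY] at hxj
        obtain ⟨r, hr, hrx⟩ := hxj
        have heq : q * a l * g = r * a j * 1 := by rw [mul_one]; exact hqx.trans hrx.symm
        have hP : a l * (a j)⁻¹ ∈ P := by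
          rw [mul_inv_eq_iff_eq_mul.mpr (shift heq)]
          exact mul_mem (mul_mem (inv_mem (hPsub_le l hq)) hr)
            (mul_mem (one_mem P) (inv_mem hg))
        have hlj : l = j := hsame l j hP
        refine Or.inr ⟨l, g, hg, Set.inter_eq_left.mpr ?_⟩
        rw [hlj]
        exact hXY j g hg
    · -- Ti = Y_i
      rw [memY] at hxi
      obtain ⟨q, hq, hqx⟩ := hxi
      rcases hTj with ⟨g', hg', rfl⟩ | ⟨m, hmj, g', hg', rfl⟩ | rfl
      · rw [Set.mem_singleton_iff] at hxj
        subst hxj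
        exact Or.inl ⟨x, hg', Set.inter_eq_right.mpr (Set.singleton_subset_iff.mpr
          ((memY _ _ _).mpr ⟨q, hq, hqx⟩))⟩
      · rw [memX] at hxj
        obtain ⟨r, hr, hrx⟩ := hxj
        have heq : r * a m * g' = q * a i * 1 := by rw [mul_one]; exact hrx.trans hqx.symm
        have hP : a m * (a i)⁻¹ ∈ P := by
          rw [mul_inv_eq_iff_eq_mul.mpr (shift heq)]
          exact mul_mem (mul_mem (inv_mem (hPsub_le m hr)) hq)
            (mul_mem (one_mem P) (inv_mem hg'))
        have hmi : m = i := hsame m i hP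
        refine Or.inr ⟨m, g', hg', Set.inter_eq_right.mpr ?_⟩
        rw [hmi]
        exact hXY i g' hg'
      · rw [memY] at hxj
        obtain ⟨r, hr, hrx⟩ := hxj
        have heq : q * a i * 1 = r * a j * 1 := by rw [mul_one, mul_one]; exact hqx.trans hrx.symm
        have hP : a i * (a j)⁻¹ ∈ P := by
          rw [mul_inv_eq_iff_eq_mul.mpr (shift heq)]
          exact mul_mem (mul_mem (inv_mem hq) hr) (mul_mem (one_mem P) (inv_mem (one_mem P)))
        exact absurd (hsame i j hP) hij
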